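/- There exists δ > 0 such that the family {S₁, S₂} is a δ-gap synergistic family adapted to φ: for every q ∈ {1,2} and every z ∈ S¹ with z ≠ (1,0) at which the manifold differential (mfderiv) of the warped cost φ̃_q := φ∘S_q vanishes, there exists p ∈ {1,2} with φ̃_p(z) + δ < φ̃_q(z). -/

import Mathlib

open scoped Manifold

instance : Fact (Module.finrank ℝ (EuclideanSpace ℝ (Fin 2)) = 1 + 1) :=
  ⟨finrank_euclideanSpace_fin⟩

/-- Application of a `2 × 2` real matrix to a vector of Euclidean 2-space by
matrix-vector multiplication. -/
noncomputable def matApp2 (A : Matrix (Fin 2) (Fin 2) ℝ)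
    (z : EuclideanSpace ℝ (Fin 2)) : EuclideanSpace ℝ (Fin 2) :=
  Matrix.toEuclideanLin A z

/-- The cost `φ(z) = 1 − z₁` on the ambient plane. -/
noncomputable def phiAmb (w : EuclideanSpace ℝ (Fin 2)) : ℝ := 1 - w 0

/-- The rotation generator `Ψ = !![0, -1; 1, 0]`. -/
noncomputable def PsiMat : Matrix (Fin 2) (Fin 2) ℝ := !![0, -1; 1, 0]

/-- The gains `k₁ = 1/2`, `k₂ = −1/2`. -/
noncomputable def kGain : Fin 2 → ℝ := ![1 / 2, -(1 / 2)]

/-- The warping map `S_q` (with `γ = 1` and `α(r) = r²`): `S_q(z) = z` if `φ(z) ≤ 1`,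
and `S_q(z) = exp(k_q·(φ(z)−1)²·Ψ)·z` otherwise; it preserves the unit circle since `Ψ`
is skew-symmetric. -/
noncomputable def SWarp (q : Fin 2) (w : EuclideanSpace ℝ (Fin 2)) :
    EuclideanSpace ℝ (Fin 2) :=
  if phiAmb w ≤ 1 then w
  else matApp2 (NormedSpace.exp ((kGain q * (phiAmb w - 1) ^ 2) • PsiMat)) w

/-- The warped cost `φ̃_q = φ ∘ S_q` as a function on the unit circle `S¹`. -/
noncomputable def phiWarp (q : Fin 2)
    (z : Metric.sphere (0 : EuclideanSpace ℝ (Fin 2)) 1) : ℝ :=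
  phiAmb (SWarp q (z : EuclideanSpace ℝ (Fin 2)))

/-- The minimizer `(1, 0)` of `φ` on the circle. -/
noncomputable def pPlus : EuclideanSpace ℝ (Fin 2) := (WithLp.equiv 2 (Fin 2 → ℝ)).symm ![1, 0]

/-! ### Auxiliary material for the proof -/

attribute [local instance] Matrix.linftyOpNormedRing Matrix.linftyOpNormedAlgebra

set_option linter.unnecessarySeqFocus false
set_option linter.unnecessarySimpa false

/-- The standard real-algebra embedding of `ℂ` into `2 × 2` real matrices. -/
noncomputable def toM : ℂ →ₐ[ℝ] Matrix (Fin 2) (Fin 2) ℝ where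
  toFun c := !![c.re, -c.im; c.im, c.re]
  map_one' := by simp [Matrix.one_fin_two]
  map_mul' a b := by
    ext i j
    fin_cases i <;> fin_cases j <;> simp [Matrix.mul_fin_two] <;> ring
  map_zero' := by ext i j; fin_cases i <;> fin_cases j <;> simp
  map_add' a b := by ext i j; fin_cases i <;> fin_cases j <;> simp <;> ring
  commutes' r := by
    ext i j
    fin_cases i <;> fin_cases j <;>
      simp [Algebra.algebraMap_eq_smul_one, Matrix.one_fin_two]

lemma toM_cont : Continuous toM := by
  apply continuous_pi; intro i; apply continuous_pi; intro j
  fin_cases i <;> fin_cases j <;> simp [toM] <;> fun_prop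

/-- The matrix exponential of `s • Ψ` is the rotation by angle `s`. -/
lemma expPsi (s : ℝ) : NormedSpace.exp (s • PsiMat) =
    !![Real.cos s, -Real.sin s; Real.sin s, Real.cos s] := by
  have h1 : s • PsiMat = toM (s * Complex.I) := by
    ext i j; fin_cases i <;> fin_cases j <;> simp [toM, PsiMat]
  rw [h1]
  erw [← NormedSpace.map_exp toM toM_cont]
  rw [← Complex.exp_eq_exp_ℂ,
    Complex.exp_mul_I]
  ext i j
  fin_cases i <;> fin_cases j <;>
    simp [toM, Complex.cos_ofReal_re, Complex.sin_ofReal_re, Complex.add_im, Complex.add_re]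

/-- `(min x 0)²`, the C¹ cut-off appearing in the warping angle. -/
noncomputable def mfun (x : ℝ) : ℝ := min x 0 ^ 2

lemma mfun_eq (x : ℝ) : mfun x = min x 0 * x := by
  rcases le_total x 0 with h | h
  · simp [mfun, min_eq_left h]; ring
  · simp [mfun, min_eq_right h]

lemma hasDerivAt_mfun (x : ℝ) : HasDerivAt mfun (2 * min x 0) x := by
  rcases lt_trichotomy x 0 with h | h | h
  · have : HasDerivAt (fun y : ℝ => y ^ 2) (2 * x) x := by
      simpa using (hasDerivAt_pow 2 x)
    refine (this.congr_of_eventuallyEq ?_).congr_deriv (by rw [min_eq_left h.le])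
    filter_upwards [eventually_lt_nhds h] with y hy
    simp [mfun, min_eq_left hy.le]
  · subst h
    rw [hasDerivAt_iff_tendsto_slope]
    have : (slope mfun 0) =ᶠ[nhdsWithin 0 {(0:ℝ)}ᶜ] fun y => min y 0 := by
      filter_upwards [self_mem_nhdsWithin] with y hy
      have : y ≠ 0 := hy
      simp [slope, mfun_eq, this, mul_comm, mul_div_assoc]
    rw [Filter.tendsto_congr' this]
    have hc : Filter.Tendsto (fun y : ℝ => min y 0) (nhds 0) (nhds (min 0 0)) :=
      (continuous_id.min continuous_const).tendsto 0
    simpa using hc.mono_left nhdsWithin_le_nhds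
  · refine ((hasDerivAt_const x (0:ℝ)).congr_of_eventuallyEq ?_).congr_deriv
      (by rw [min_eq_right h.le]; ring)
    filter_upwards [eventually_gt_nhds h] with y hy
    simp [mfun, min_eq_right hy.le]

/-- The ambient warped cost in coordinates. -/
noncomputable def Famb (q : Fin 2) (x y : ℝ) : ℝ :=
  1 - (Real.cos (kGain q * mfun x) * x - Real.sin (kGain q * mfun x) * y)

lemma matApp2_apply (A : Matrix (Fin 2) (Fin 2) ℝ) (z : EuclideanSpace ℝ (Fin 2)) (i : Fin 2) :
    matApp2 A z i = A i 0 * z 0 + A i 1 * z 1 := by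
  simp [matApp2, Matrix.toEuclideanLin_apply, Matrix.mulVec, dotProduct,
    Fin.sum_univ_two]
  fin_cases i <;> simp

lemma swarp_eq (q : Fin 2) (w : EuclideanSpace ℝ (Fin 2)) :
    phiAmb (SWarp q w) = Famb q (w 0) (w 1) := by
  rw [SWarp]
  by_cases h : phiAmb w ≤ 1
  · rw [if_pos h]
    have h0 : (0:ℝ) ≤ w 0 := by simpa [phiAmb, sub_le_iff_le_add] using h
    have : mfun (w 0) = 0 := by simp [mfun, min_eq_right h0]
    simp [Famb, this, phiAmb]
  · rw [if_neg h]
    have h0 : w 0 < 0 := by simp only [phiAmb, not_le] at h; linarith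
    have h1 : phiAmb w - 1 = -(w 0) := by simp only [phiAmb]; ring
    have h2 : mfun (w 0) = w 0 ^ 2 := by simp [mfun, min_eq_left h0.le]
    rw [h1]
    have h3 : kGain q * (-(w 0)) ^ 2 = kGain q * mfun (w 0) := by rw [h2]; ring
    rw [h3, expPsi]
    simp [phiAmb, Famb, matApp2_apply]
    ring

lemma phiWarp_eq (q : Fin 2) (z : Metric.sphere (0 : EuclideanSpace ℝ (Fin 2)) 1) :
    phiWarp q z = Famb q ((z : EuclideanSpace ℝ (Fin 2)) 0)
      ((z : EuclideanSpace ℝ (Fin 2)) 1) :=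
  swarp_eq q _

/-- Derivative of the warped cost along the rotation curve through `(x, y)`. -/
lemma key_deriv (q : Fin 2) (x y : ℝ) :
    HasDerivAt (fun t => Famb q (Real.cos t * x - Real.sin t * y)
        (Real.sin t * x + Real.cos t * y))
      ((1 + kGain q * (2 * min x 0) * (-y)) *
        (Real.sin (kGain q * mfun x) * x + Real.cos (kGain q * mfun x) * y)) 0 := by
  have hu : HasDerivAt (fun t => Real.cos t * x - Real.sin t * y) (-y) 0 := by
    exact (((Real.hasDerivAt_cos 0).mul_const x).sub ((Real.hasDerivAt_sin 0).mul_const y)).congr_deriv (by simp)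
  have hv : HasDerivAt (fun t => Real.sin t * x + Real.cos t * y) x 0 := by
    exact (((Real.hasDerivAt_sin 0).mul_const x).add ((Real.hasDerivAt_cos 0).mul_const y)).congr_deriv (by simp)
  have hm : HasDerivAt mfun (2 * min x 0) (Real.cos 0 * x - Real.sin 0 * y) := by
    simpa using hasDerivAt_mfun x
  have hb : HasDerivAt (fun t => kGain q * mfun (Real.cos t * x - Real.sin t * y))
      (kGain q * (2 * min x 0 * -y)) 0 := (HasDerivAt.comp (h₂ := mfun) 0 hm hu).const_mul (kGain q)
  have hh := ((hasDerivAt_const (0:ℝ) (1:ℝ)).sub ((hb.cos.mul hu).sub (hb.sin.mul hv)))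
  simp only [Famb]
  refine hh.congr_deriv ?_
  simp only [Real.cos_zero, Real.sin_zero, one_mul, zero_mul, mul_zero, sub_zero, zero_add,
    mul_one, zero_sub, neg_neg]
  ring

lemma sphere_sum (z : Metric.sphere (0 : EuclideanSpace ℝ (Fin 2)) 1) :
    ((z : EuclideanSpace ℝ (Fin 2)) 0) ^ 2 + ((z : EuclideanSpace ℝ (Fin 2)) 1) ^ 2 = 1 := by
  have hnorm : ‖(z : EuclideanSpace ℝ (Fin 2))‖ = 1 := by
    simpa using mem_sphere_zero_iff_norm.mp z.2
  have := EuclideanSpace.norm_eq (z : EuclideanSpace ℝ (Fin 2))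
  rw [hnorm] at this
  have h2 : Real.sqrt (∑ i : Fin 2, ‖(z : EuclideanSpace ℝ (Fin 2)) i‖ ^ 2) = 1 := this.symm
  rw [Real.sqrt_eq_one] at h2
  simpa [Fin.sum_univ_two, sq_abs] using h2

/-- At a critical point of `φ̃_q` on the circle, the derivative along the rotation
curve vanishes. -/
lemma crit_eq (q : Fin 2) (z : Metric.sphere (0 : EuclideanSpace ℝ (Fin 2)) 1)
    (hz : mfderiv (𝓡 1) 𝓘(ℝ, ℝ) (phiWarp q) z = 0) :
    (1 + kGain q * (2 * min ((z : EuclideanSpace ℝ (Fin 2)) 0) 0) *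
        (-((z : EuclideanSpace ℝ (Fin 2)) 1))) *
      (Real.sin (kGain q * mfun ((z : EuclideanSpace ℝ (Fin 2)) 0)) *
          ((z : EuclideanSpace ℝ (Fin 2)) 0) +
        Real.cos (kGain q * mfun ((z : EuclideanSpace ℝ (Fin 2)) 0)) *
          ((z : EuclideanSpace ℝ (Fin 2)) 1)) = 0 := by
  set E := EuclideanSpace ℝ (Fin 2)
  set x := (z : E) 0 with hx
  set y := (z : E) 1 with hy
  have hsum : x ^ 2 + y ^ 2 = 1 := sphere_sum z
  -- the plane curve
  set c : ℝ → E := fun t => (WithLp.equiv 2 (Fin 2 → ℝ)).symm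
    ![Real.cos t * x - Real.sin t * y, Real.sin t * x + Real.cos t * y] with hc
  have hci : ∀ t i, c t i = ![Real.cos t * x - Real.sin t * y,
      Real.sin t * x + Real.cos t * y] i := fun t i => rfl
  have hcmem : ∀ t, c t ∈ Metric.sphere (0 : E) 1 := by
    intro t
    rw [mem_sphere_zero_iff_norm, EuclideanSpace.norm_eq]
    have : ∑ i : Fin 2, ‖c t i‖ ^ 2 = 1 := by
      rw [Fin.sum_univ_two]
      simp only [hci, sq_abs, Matrix.cons_val_zero, Matrix.cons_val_one, Matrix.head_cons,
        Real.norm_eq_abs]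
      have expand : (Real.cos t * x - Real.sin t * y) ^ 2 +
          (Real.sin t * x + Real.cos t * y) ^ 2 =
          (x ^ 2 + y ^ 2) * (Real.sin t ^ 2 + Real.cos t ^ 2) := by ring
      rw [expand, Real.sin_sq_add_cos_sq, hsum, mul_one]
    rw [this, Real.sqrt_one]
  have hcsmooth : ContMDiff 𝓘(ℝ, ℝ) 𝓘(ℝ, E) ⊤ c := by
    rw [contMDiff_iff_contDiff]
    apply contDiff_euclidean.mpr
    intro i
    fin_cases i <;>
      simp only [hci, Fin.zero_eta, Fin.mk_one, Matrix.cons_val_zero, Matrix.cons_val_one,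
        Matrix.head_cons]
    · exact (Real.contDiff_cos.mul contDiff_const).sub (Real.contDiff_sin.mul contDiff_const)
    · exact (Real.contDiff_sin.mul contDiff_const).add (Real.contDiff_cos.mul contDiff_const)
  set csph : ℝ → Metric.sphere (0 : E) 1 := Set.codRestrict c _ hcmem with hcsph
  have hcsph_smooth : ContMDiff 𝓘(ℝ, ℝ) (𝓡 1) ⊤ csph :=
    ContMDiff.codRestrict_sphere hcsmooth hcmem
  have hcsph0 : csph 0 = z := by
    apply Subtype.ext
    show c 0 = (z : E)
    ext i
    fin_cases i <;>
      simp [hci, ← hx, ← hy]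
  -- differentiability of the ambient cost
  have hmdiff : Differentiable ℝ mfun := fun a => (hasDerivAt_mfun a).differentiableAt
  have h0 : Differentiable ℝ (fun w : E => w 0) := (PiLp.proj 2 (fun _ : Fin 2 => ℝ) 0).differentiable
  have h1 : Differentiable ℝ (fun w : E => w 1) := (PiLp.proj 2 (fun _ : Fin 2 => ℝ) 1).differentiable
  have hk : Differentiable ℝ (fun w : E => kGain q * mfun (w 0)) :=
    (hmdiff.comp h0).const_mul _
  have hF : Differentiable ℝ (fun w : E => Famb q (w 0) (w 1)) := by
    simp only [Famb]
    exact (differentiable_const 1).sub ((hk.cos.mul h0).sub (hk.sin.mul h1))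
  have hphi : phiWarp q = (fun w : E => Famb q (w 0) (w 1)) ∘
      (Subtype.val : Metric.sphere (0 : E) 1 → E) := funext fun w => phiWarp_eq q w
  have hmphi : MDifferentiableAt (𝓡 1) 𝓘(ℝ, ℝ) (phiWarp q) z := by
    rw [hphi]
    exact ((hF _).mdifferentiableAt).comp z
      ((contMDiff_coe_sphere z).mdifferentiableAt WithTop.top_ne_zero)
  have hmc : MDifferentiableAt 𝓘(ℝ, ℝ) (𝓡 1) csph 0 :=
    (hcsph_smooth 0).mdifferentiableAt WithTop.top_ne_zero
  have hcomp := mfderiv_comp (I' := 𝓡 1) 0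
    (by rw [hcsph0]; exact hmphi) hmc
  rw [hcsph0, hz] at hcomp
  erw [ContinuousLinearMap.zero_comp] at hcomp
  -- identify with the ordinary derivative
  have hfun : (phiWarp q ∘ csph) = fun t => Famb q (Real.cos t * x - Real.sin t * y)
      (Real.sin t * x + Real.cos t * y) := by
    funext t
    show phiWarp q (csph t) = _
    rw [phiWarp_eq]
    rfl
  have hfder : fderiv ℝ (phiWarp q ∘ csph) 0 = 0 := by
    rw [← mfderiv_eq_fderiv]
    exact hcomp
  have hderiv : deriv (phiWarp q ∘ csph) 0 = 0 := by
    rw [deriv, hfder]; rfl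
  have hkey := key_deriv q x y
  rw [← hfun] at hkey
  rw [← hkey.deriv, hderiv]

lemma aux_xy (x y : ℝ) (hsum : x ^ 2 + y ^ 2 = 1) : |x * y| ≤ 1/2 := by
  rw [abs_mul]
  nlinarith [sq_nonneg (|x| - |y|), sq_abs x, sq_abs y, abs_nonneg x, abs_nonneg y]

lemma aux_numeric (t : ℝ) (ht0 : 0 ≤ t) (ht2 : t ≤ 1/2)
    (hct : Real.cos t ^ 2 = 2 * t) : 4 * t + 1/20 < 2 := by
  have hc1 : 1 - t ^ 2 / 2 ≤ Real.cos t := Real.one_sub_sq_div_two_le_cos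
  have hcos78 : (7:ℝ)/8 ≤ Real.cos t := by nlinarith
  have ht49 : 49/128 ≤ t := by nlinarith
  have hsin := Real.sin_gt_sub_cube (by linarith : (0:ℝ) < t)
  have hsinlow : (735:ℝ)/2048 < Real.sin t := by nlinarith
  have hid := Real.sin_sq_add_cos_sq t
  nlinarith [hsinlow, hid, hct]

/-- The heart of the argument, in purely real-variable form: at a point `(x, y)` of the
circle where the rotation-curve derivative of the warped cost vanishes, either
`(x, y) = (1, 0)`, or the warped cost for the opposite gain is smaller by more
than `1/20`. -/
lemma real_core (k x y : ℝ) (hk : k = 1/2 ∨ k = -(1/2)) (hsum : x ^ 2 + y ^ 2 = 1)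
    (hE : (1 + k * (2 * min x 0) * (-y)) *
      (Real.sin (k * mfun x) * x + Real.cos (k * mfun x) * y) = 0) :
    (x = 1 ∧ y = 0) ∨
      (1 - (Real.cos (-k * mfun x) * x - Real.sin (-k * mfun x) * y) + 1/20 <
        1 - (Real.cos (k * mfun x) * x - Real.sin (k * mfun x) * y)) := by
  have hx1 : x ^ 2 ≤ 1 := by nlinarith [sq_nonneg y]
  have hy1 : y ^ 2 ≤ 1 := by nlinarith [sq_nonneg x]
  have hkabs : |k| = 1/2 := by rcases hk with h | h <;> rw [h] <;> norm_num
  set β := k * mfun x with hβ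
  clear_value β
  have hmin_abs : |min x 0| ≤ |x| := by
    rcases le_total x 0 with h | h
    · rw [min_eq_left h]
    · rw [min_eq_right h]; simp [abs_nonneg]
  have hxy : |x * y| ≤ 1/2 := aux_xy x y hsum
  have hpre : |k * (2 * min x 0) * (-y)| ≤ 1/2 := by
    rw [abs_mul, abs_mul, hkabs, abs_neg]
    calc 1/2 * |2 * min x 0| * |y| = |min x 0| * |y| := by rw [abs_mul, abs_two]; ring
      _ ≤ |x| * |y| := mul_le_mul_of_nonneg_right hmin_abs (abs_nonneg y)
      _ = |x * y| := (abs_mul x y).symm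
      _ ≤ 1/2 := hxy
  have hpre_pos : 0 < 1 + k * (2 * min x 0) * (-y) := by
    have := abs_le.mp hpre
    linarith [this.1]
  have hS : Real.sin β * x + Real.cos β * y = 0 := by
    rcases mul_eq_zero.mp hE with h | h
    · exact absurd h (by linarith)
    · exact h
  clear hE hpre hpre_pos
  rcases lt_or_ge x 0 with hxneg | hxpos
  swap
  · -- unwarped region
    left
    have hm0 : mfun x = 0 := by simp [mfun, min_eq_right hxpos]
    rw [hβ, hm0, mul_zero, Real.sin_zero, Real.cos_zero] at hS
    have hy0 : y = 0 := by linarith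
    have hx2 : x * x = 1 := by linear_combination hsum - y * hy0
    rcases mul_self_eq_one_iff.mp hx2 with h1 | h1
    · exact ⟨h1, hy0⟩
    · exact absurd h1 (by linarith)
  · -- warped region
    right
    have hm : mfun x = x ^ 2 := by simp [mfun, min_eq_left hxneg.le]
    have hβval : β = k * x ^ 2 := by rw [hβ, hm]
    have hβabs : |β| ≤ 1/2 := by
      rw [hβval, abs_mul, hkabs, abs_of_nonneg (sq_nonneg x)]
      linarith
    have hβsq : β ^ 2 ≤ 1/4 := by
      have h := abs_le.mp hβabs
      have := sq_le_sq' h.1 h.2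
      norm_num at this
      linarith
    have hcosβ : (7:ℝ)/8 ≤ Real.cos β := by
      have := Real.one_sub_sq_div_two_le_cos (x := β)
      linarith
    have hsinβ : |Real.sin β| ≤ 1/2 := le_trans Real.abs_sin_le_abs hβabs
    have ha2 : (Real.cos β * x - Real.sin β * y) ^ 2 = 1 := by
      have expand : (Real.cos β * x - Real.sin β * y) ^ 2 +
          (Real.sin β * x + Real.cos β * y) ^ 2 =
          (x ^ 2 + y ^ 2) * (Real.sin β ^ 2 + Real.cos β ^ 2) := by ring
      rw [hS, hsum, Real.sin_sq_add_cos_sq] at expand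
      simpa using expand
    set a := Real.cos β * x - Real.sin β * y with ha
    clear_value a
    have ha_lt : a < 1 := by
      have h1 : Real.cos β * x < 0 := mul_neg_of_pos_of_neg (by linarith) hxneg
      have h2 : -(Real.sin β * y) ≤ |Real.sin β| * |y| := by
        rw [← abs_mul]; exact neg_le_abs _
      have h3 : |y| ≤ 1 := abs_le.mpr ⟨by nlinarith [sq_abs y], by nlinarith [sq_abs y]⟩
      have h4 : |Real.sin β| * |y| ≤ 1/2 * 1 :=
        mul_le_mul hsinβ h3 (abs_nonneg y) (by norm_num)
      linarith [ha.ge, ha.le]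
    have haval : a = -1 := by
      rcases mul_self_eq_one_iff.mp (by linear_combination ha2 : a * a = 1) with h | h
      · exact absurd h (by linarith)
      · exact h
    have hxval : x = -Real.cos β := by
      linear_combination Real.cos β * haval + Real.sin β * hS -
        x * (Real.sin_sq_add_cos_sq β) - Real.cos β * ha
    have hyval : y = Real.sin β := by
      linear_combination (-(Real.sin β)) * haval + Real.cos β * hS -
        y * (Real.sin_sq_add_cos_sq β) + Real.sin β * ha
    have hcos_even : Real.cos (-k * mfun x) = Real.cos β := by
      rw [show -k * mfun x = -β by rw [hβ]; ring, Real.cos_neg]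
    have hsin_odd : Real.sin (-k * mfun x) = -Real.sin β := by
      rw [show -k * mfun x = -β by rw [hβ]; ring, Real.sin_neg]
    rw [hcos_even, hsin_odd, haval]
    have hL : 1 - (Real.cos β * x - -Real.sin β * y) = 2 * x ^ 2 := by
      rw [hxval, hyval]
      linear_combination (-1 : ℝ) * (Real.sin_sq_add_cos_sq β)
    rw [hL]
    have hx2cosβ : x ^ 2 = Real.cos β ^ 2 := by rw [hxval]; ring
    have hβt : Real.cos β = Real.cos (x ^ 2 / 2) := by
      rcases hk with h | h
      · rw [hβval, h, show (1:ℝ)/2 * x ^ 2 = x ^ 2 / 2 by ring]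
      · rw [hβval, h]
        rw [show -(1/2) * x ^ 2 = -(x ^ 2 / 2) by ring, Real.cos_neg]
    have hct : Real.cos (x ^ 2 / 2) ^ 2 = 2 * (x ^ 2 / 2) := by
      rw [← hβt, ← hx2cosβ]; ring
    have ht0 : 0 ≤ x ^ 2 / 2 := by positivity
    have ht2 : x ^ 2 / 2 ≤ 1/2 := by linarith
    have := aux_numeric (x ^ 2 / 2) ht0 ht2 hct
    linarith

/-- There exists `δ > 0` such that `{S₁, S₂}` is a `δ`-gap synergistic
family adapted to `φ(z) = 1 − z₁` on `S¹`: for every `q ∈ {1,2}` and every `z ∈ S¹` with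
`z ≠ (1,0)` at which the manifold differential of `φ̃_q = φ ∘ S_q` vanishes, there exists
`p ∈ {1,2}` with `φ̃_p(z) + δ < φ̃_q(z)`. -/
theorem stmt15 :
    ∃ δ : ℝ, 0 < δ ∧
      ∀ q : Fin 2, ∀ z : Metric.sphere (0 : EuclideanSpace ℝ (Fin 2)) 1,
        (z : EuclideanSpace ℝ (Fin 2)) ≠ pPlus →
        mfderiv (𝓡 1) 𝓘(ℝ, ℝ) (phiWarp q) z = 0 →
        ∃ p : Fin 2, phiWarp p z + δ < phiWarp q z := by
  refine ⟨1/20, by norm_num, fun q z hne hz => ?_⟩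
  have hkq : kGain q = 1/2 ∨ kGain q = -(1/2) := by
    fin_cases q <;> simp [kGain]
  have hE := crit_eq q z hz
  rcases real_core (kGain q) _ _ hkq (sphere_sum z) hE with ⟨hx1, hy0⟩ | hlt
  · exfalso
    apply hne
    ext i
    fin_cases i
    · show (z : EuclideanSpace ℝ (Fin 2)) 0 = pPlus 0
      rw [hx1]; rfl
    · show (z : EuclideanSpace ℝ (Fin 2)) 1 = pPlus 1
      rw [hy0]; rfl
  · obtain ⟨p, hp⟩ : ∃ p : Fin 2, kGain p = -(kGain q) := by
      rcases hkq with h | h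
      · exact ⟨1, by rw [h]; norm_num [kGain]⟩
      · exact ⟨0, by rw [h]; norm_num [kGain]⟩
    refine ⟨p, ?_⟩
    rw [phiWarp_eq, phiWarp_eq]
    simp only [Famb, hp]
    convert hlt using 4
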